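/- Suppose there exists a polynomial-time algorithm A for the multiprocessor partitioned packing problem with approximation factor 2 − ε for some ε > 0 (i.e., A always returns a feasible partition on at most (2 − ε)·M* processors, where M* is the optimum). Then A decides uniprocessor EDF feasibility: A returns a one-processor partition if and only if the task set is EDF-feasible on one processor. -/

import Mathlib

/-- Demand bound function of a sporadic task (C, T, D) at time t. -/
noncomputable def dbf (C T D t : ℝ) : ℝ := ((max 0 (⌊(t - D) / T⌋ + 1) : ℤ) : ℝ) * C

/-- A set of tasks is EDF-feasible on one processor iff its total demand never exceeds t. -/
def EDFFeasible {ι : Type*} (S : Finset ι) (C T D : ι → ℝ) : Prop :=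
  ∀ t : ℝ, 0 ≤ t → ∑ i ∈ S, dbf (C i) (T i) (D i) t ≤ t

/-- The task set admits a feasible partition on M processors. -/
def FeasibleOn {ι : Type*} [Fintype ι] [DecidableEq ι] (C T D : ι → ℝ) (M : ℕ) : Prop :=
  ∃ p : ι → Fin M, ∀ m : Fin M,
    EDFFeasible (Finset.univ.filter (fun i => p i = m)) C T D

theorem approx_algorithm_decides_feasibility {ι : Type*} [Fintype ι] [DecidableEq ι]
    [Nonempty ι] (C T D : ι → ℝ) (ε : ℝ) (hε : 0 < ε)
    (a : ℕ)  -- the number of processors used by algorithm 𝒜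
    (ha_feas : FeasibleOn C T D a)  -- 𝒜 outputs a feasible partition
    (ha_approx : ∀ M : ℕ, FeasibleOn C T D M → (a : ℝ) ≤ (2 - ε) * M) :
    a = 1 ↔ FeasibleOn C T D 1 := by
  constructor
  · rintro rfl; exact ha_feas
  · intro h1
    have hle : (a : ℝ) ≤ (2 - ε) * (1:ℕ) := ha_approx 1 h1
    have h2 : (a : ℝ) < 2 := by push_cast at hle; linarith
    have ha2 : a < 2 := by exact_mod_cast h2
    have ha0 : a ≠ 0 := by
      rintro rfl
      obtain ⟨p, _⟩ := ha_feas
      exact (p (Classical.arbitrary ι)).elim0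
    omega
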